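/- Let F be the free (noncommutative) ring on two generators α and β. If a subring S of F contains all elements w + w^γ for words w of length at most k (where γ swaps the generators) and is generated as a ring by such elements, then S is a proper subring of F^{ℤ/2}: the invariant subalgebra F^{ℤ/2} is not generated by its elements of degree at most k, for any k ≥ 1. -/

import Mathlib

/-- The swap automorphism of `F = ℂ⟨α, β⟩`. -/
noncomputable def swapAlg : FreeAlgebra ℂ (Fin 2) →ₐ[ℂ] FreeAlgebra ℂ (Fin 2) :=
  FreeAlgebra.lift ℂ fun i => FreeAlgebra.ι ℂ (1 - i)

/-- The letter-swap on words. -/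
def swapWord : FreeMonoid (Fin 2) →* FreeMonoid (Fin 2) :=
  FreeMonoid.map fun i => 1 - i

/-- Interpretation of a word as a product of generators. -/
noncomputable def wordToAlg : FreeMonoid (Fin 2) →* FreeAlgebra ℂ (Fin 2) :=
  FreeMonoid.lift (FreeAlgebra.ι ℂ)

/-- `w* = w + w^γ`. -/
noncomputable def wStar (w : FreeMonoid (Fin 2)) : FreeAlgebra ℂ (Fin 2) :=
  wordToAlg w + wordToAlg (swapWord w)

/-! ### Auxiliary combinatorics: the sign `(-1)^(number of adjacent letter changes)` -/

/-- Letter flip. -/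
def flip2 : Fin 2 → Fin 2 := fun i => 1 - i

lemma flip2_flip2 (a : Fin 2) : flip2 (flip2 a) = a := by revert a; decide

lemma eq_flip2_iff (a b : Fin 2) : (a = flip2 b) ↔ ¬ (a = b) := by revert a b; decide

/-- Sign of the number of letter changes in `a :: l`. -/
noncomputable def sgn : Fin 2 → List (Fin 2) → ℂ
  | _, [] => 1
  | a, b :: t => (if a = b then 1 else -1) * sgn b t

/-- Sign of the number of adjacent letter changes. -/
noncomputable def signList : List (Fin 2) → ℂ
  | [] => 1
  | a :: t => sgn a t

lemma sgn_map_flip : ∀ (t : List (Fin 2)) (a : Fin 2),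
    sgn (flip2 a) (t.map flip2) = sgn a t
  | [], _ => rfl
  | b :: t, a => by
    simp only [List.map_cons, sgn, sgn_map_flip t b]
    have hiff : (flip2 a = flip2 b) ↔ (a = b) := by revert a b; decide
    congr 1
    simp [hiff]

lemma sgn_flip_head (a b : Fin 2) (t : List (Fin 2)) :
    sgn a ((b :: t).map flip2) = - sgn a (b :: t) := by
  have h2 : sgn (flip2 b) (t.map flip2) = sgn b t := by
    have := sgn_map_flip t b
    simpa using this
  simp only [List.map_cons, sgn, h2]
  by_cases h : a = b
  · have hne : ¬ (a = flip2 b) := by rw [eq_flip2_iff]; simpa using h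
    rw [if_pos h, if_neg hne]
    ring
  · have he : a = flip2 b := (eq_flip2_iff a b).mpr h
    rw [if_neg h, if_pos he]
    ring

lemma sgn_append_flip : ∀ (w : List (Fin 2)) (a : Fin 2) (v : List (Fin 2)), v ≠ [] →
    sgn a (w ++ v.map flip2) = - sgn a (w ++ v)
  | [], a, v, hv => by
    obtain ⟨b, t, rfl⟩ : ∃ b t, v = b :: t := by
      cases v with
      | nil => exact absurd rfl hv
      | cons b t => exact ⟨b, t, rfl⟩
    simpa using sgn_flip_head a b t
  | c :: w, a, v, hv => by
    simp only [List.cons_append, sgn, List.append_eq, sgn_append_flip w c v hv]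
    ring

lemma signList_append_flip (w v : List (Fin 2)) (hw : w ≠ []) (hv : v ≠ []) :
    signList (w ++ v.map flip2) = - signList (w ++ v) := by
  obtain ⟨a, w, rfl⟩ : ∃ a w', w = a :: w' := by
    cases w with
    | nil => exact absurd rfl hw
    | cons a w' => exact ⟨a, w', rfl⟩
  simpa [signList] using sgn_append_flip w a v hv

lemma sgn_replicate_cons (a b : Fin 2) (h : a ≠ b) :
    ∀ m : ℕ, sgn a (List.replicate m a ++ [b]) = -1
  | 0 => by simp [sgn, h]
  | m + 1 => by
    rw [List.replicate_succ, List.cons_append]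
    simp [sgn, sgn_replicate_cons a b h m]

/-! ### The linear functional -/

/-- Basis function: the sign on words of length exactly `n`, zero otherwise. -/
noncomputable def phiFun (n : ℕ) (w : FreeMonoid (Fin 2)) : ℂ :=
  if (FreeMonoid.toList w).length = n then signList (FreeMonoid.toList w) else 0

/-- The linear functional extending `phiFun n` over the word basis. -/
noncomputable def Phi (n : ℕ) : FreeAlgebra ℂ (Fin 2) →ₗ[ℂ] ℂ :=
  (FreeAlgebra.basisFreeMonoid ℂ (Fin 2)).constr ℂ (phiFun n)

lemma equiv_wordToAlg (w : FreeMonoid (Fin 2)) :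
    FreeAlgebra.equivMonoidAlgebraFreeMonoid (R := ℂ) (X := Fin 2) (wordToAlg w)
      = MonoidAlgebra.of ℂ (FreeMonoid (Fin 2)) w := by
  induction w using FreeMonoid.recOn with
  | one => simp [MonoidAlgebra.one_def]
  | of_mul x xs ih =>
    rw [map_mul, map_mul, map_mul, ih]
    congr 1
    show FreeAlgebra.equivMonoidAlgebraFreeMonoid (wordToAlg (FreeMonoid.of x)) = _
    have : wordToAlg (FreeMonoid.of x) = FreeAlgebra.ι ℂ x := rfl
    rw [this]
    simp [FreeAlgebra.equivMonoidAlgebraFreeMonoid]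

lemma basis_eq_wordToAlg (w : FreeMonoid (Fin 2)) :
    FreeAlgebra.basisFreeMonoid ℂ (Fin 2) w = wordToAlg w := by
  rw [FreeAlgebra.basisFreeMonoid, Module.Basis.map_apply]
  simp only [Finsupp.coe_basisSingleOne]
  apply (FreeAlgebra.equivMonoidAlgebraFreeMonoid (R := ℂ) (X := Fin 2)).injective
  rw [equiv_wordToAlg, MonoidAlgebra.of_apply]
  exact AlgEquiv.apply_symm_apply _ _

lemma Phi_wordToAlg (n : ℕ) (w : FreeMonoid (Fin 2)) :
    Phi n (wordToAlg w) = phiFun n w := by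
  rw [← basis_eq_wordToAlg, Phi, Module.Basis.constr_basis]

lemma toList_swapWord (w : FreeMonoid (Fin 2)) :
    FreeMonoid.toList (swapWord w) = (FreeMonoid.toList w).map flip2 :=
  rfl

lemma Phi_one (n : ℕ) (hn : 1 ≤ n) : Phi n 1 = 0 := by
  have h1 : (1 : FreeAlgebra ℂ (Fin 2)) = wordToAlg 1 := (map_one _).symm
  rw [h1, Phi_wordToAlg, phiFun]
  have : (FreeMonoid.toList (1 : FreeMonoid (Fin 2))).length = 0 := rfl
  rw [this]
  simp
  omega

/-- Key lemma: multiplying anything by `wStar v` (for `v` nonempty of length `≤ n-1`)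
lands in the kernel of `Phi n`. -/
lemma Phi_mul_wStar (n : ℕ) (v : FreeMonoid (Fin 2))
    (h1 : FreeMonoid.toList v ≠ []) (h2 : (FreeMonoid.toList v).length < n)
    (a : FreeAlgebra ℂ (Fin 2)) :
    Phi n (a * wStar v) = 0 := by
  have key : (Phi n).comp (LinearMap.mulRight ℂ (wStar v)) = 0 := by
    apply Module.Basis.ext (FreeAlgebra.basisFreeMonoid ℂ (Fin 2))
    intro w
    rw [basis_eq_wordToAlg]
    simp only [LinearMap.comp_apply, LinearMap.mulRight_apply, LinearMap.zero_apply]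
    rw [wStar, mul_add, ← map_mul, ← map_mul, map_add, Phi_wordToAlg, Phi_wordToAlg]
    have hl1 : FreeMonoid.toList (w * v) = FreeMonoid.toList w ++ FreeMonoid.toList v := rfl
    have hl2 : FreeMonoid.toList (w * swapWord v)
        = FreeMonoid.toList w ++ (FreeMonoid.toList v).map flip2 := by
      rw [FreeMonoid.toList_mul, toList_swapWord]
    by_cases hlen : (FreeMonoid.toList w).length + (FreeMonoid.toList v).length = n
    · have hw : FreeMonoid.toList w ≠ [] := by
        intro h
        rw [h] at hlen
        simp at hlen
        omega
      rw [phiFun, phiFun, hl1, hl2]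
      rw [if_pos (by simp [hlen]), if_pos (by simpa using hlen)]
      rw [signList_append_flip _ _ hw h1]
      ring
    · rw [phiFun, phiFun, hl1, hl2]
      rw [if_neg (by simp; omega), if_neg (by simp; omega)]
      simp
  have := LinearMap.congr_fun key a
  simpa using this

lemma Phi_listProd (k : ℕ) (L : List (FreeAlgebra ℂ (Fin 2)))
    (hL : ∀ y ∈ L, ∃ w : FreeMonoid (Fin 2),
      (FreeMonoid.toList w).length ≤ k ∧ y = wStar w) :
    Phi (k + 1) L.prod = 0 := by
  induction L using List.reverseRecOn with
  | nil => simpa using Phi_one (k + 1) (by omega)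
  | append_singleton L y IH =>
    rw [List.prod_append, List.prod_singleton]
    obtain ⟨w, hw, rfl⟩ := hL y (by simp)
    by_cases hnil : FreeMonoid.toList w = []
    · have hw1 : w = 1 := FreeMonoid.toList.injective (by simpa using hnil)
      have : wStar w = 1 + 1 := by rw [hw1, wStar, map_one, map_one, map_one]
      rw [this]
      have hIH := IH (fun y hy => hL y (by simp [hy]))
      rw [mul_add, mul_one, map_add, hIH]
      simp
    · exact Phi_mul_wStar (k + 1) w hnil (by omega) L.prod

lemma swapWord_swapWord (w : FreeMonoid (Fin 2)) : swapWord (swapWord w) = w := by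
  have : swapWord.comp swapWord = MonoidHom.id (FreeMonoid (Fin 2)) := by
    apply FreeMonoid.hom_eq
    intro x
    show swapWord (swapWord (FreeMonoid.of x)) = FreeMonoid.of x
    rw [swapWord, FreeMonoid.map_of, FreeMonoid.map_of]
    congr 1
    revert x; decide
  exact DFunLike.congr_fun this w

lemma swapAlg_wordToAlg (w : FreeMonoid (Fin 2)) :
    swapAlg (wordToAlg w) = wordToAlg (swapWord w) := by
  have : (swapAlg.toMonoidHom.comp wordToAlg : FreeMonoid (Fin 2) →* FreeAlgebra ℂ (Fin 2))
      = wordToAlg.comp swapWord := by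
    apply FreeMonoid.hom_eq
    intro x
    show swapAlg (wordToAlg (FreeMonoid.of x)) = wordToAlg (swapWord (FreeMonoid.of x))
    have h1 : wordToAlg (FreeMonoid.of x) = FreeAlgebra.ι ℂ x := rfl
    rw [h1, swapAlg, FreeAlgebra.lift_ι_apply, swapWord, FreeMonoid.map_of]
    rfl
  exact DFunLike.congr_fun this w

lemma swapAlg_wStar (w : FreeMonoid (Fin 2)) : swapAlg (wStar w) = wStar w := by
  rw [wStar, map_add, swapAlg_wordToAlg, swapAlg_wordToAlg, swapWord_swapWord, add_comm]

/-- For every `k ≥ 1`, the subalgebra generated by the elements `w + w^γ` for words `w` of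
length at most `k` is a *proper* subalgebra of the fixed subalgebra `F^{ℤ/2}`: the invariant
subalgebra is not generated by its elements of degree at most `k`. -/
theorem stmt4 (k : ℕ) (hk : 1 ≤ k) :
    Algebra.adjoin ℂ
        {x : FreeAlgebra ℂ (Fin 2) | ∃ w : FreeMonoid (Fin 2),
          (FreeMonoid.toList w).length ≤ k ∧ x = wStar w} <
      AlgHom.equalizer swapAlg (AlgHom.id ℂ (FreeAlgebra ℂ (Fin 2))) := by
  rw [SetLike.lt_iff_le_and_exists]
  constructor
  · apply Algebra.adjoin_le
    rintro x ⟨w, hw, rfl⟩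
    rw [SetLike.mem_coe, AlgHom.mem_equalizer]
    simpa using swapAlg_wStar w
  · -- the witness: `wStar (α^k β)`
    obtain ⟨k', rfl⟩ : ∃ k', k = k' + 1 := ⟨k - 1, by omega⟩
    set u : FreeMonoid (Fin 2) :=
      FreeMonoid.ofList (List.replicate (k' + 1) (0 : Fin 2) ++ [1]) with hu
    refine ⟨wStar u, ?_, ?_⟩
    · rw [AlgHom.mem_equalizer]
      simpa using swapAlg_wStar u
    · intro hmem
      -- compute `Phi (k+2) (wStar u) = -2`
      have hulist : FreeMonoid.toList u = List.replicate (k' + 1) (0 : Fin 2) ++ [1] := rfl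
      have hlen : (FreeMonoid.toList u).length = k' + 2 := by
        rw [hulist]; simp
      have hsign : signList (FreeMonoid.toList u) = -1 := by
        rw [hulist, List.replicate_succ, List.cons_append]
        show sgn 0 (List.replicate k' (0 : Fin 2) ++ [1]) = -1
        exact sgn_replicate_cons 0 1 (by decide) k'
      have hsign2 : signList ((FreeMonoid.toList u).map flip2) = -1 := by
        rw [hulist]
        have : (List.replicate (k' + 1) (0 : Fin 2) ++ [1]).map flip2
            = List.replicate (k' + 1) (1 : Fin 2) ++ [0] := by
          rw [List.map_append, List.map_replicate]
          norm_num [flip2]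
        rw [this, List.replicate_succ, List.cons_append]
        show sgn 1 (List.replicate k' (1 : Fin 2) ++ [0]) = -1
        exact sgn_replicate_cons 1 0 (by decide) k'
      have hPhi : Phi (k' + 2) (wStar u) = -2 := by
        rw [wStar, map_add, Phi_wordToAlg, Phi_wordToAlg, phiFun, phiFun, toList_swapWord]
        rw [if_pos hlen, if_pos (by simpa using hlen)]
        rw [hsign, hsign2]
        norm_num
      -- but `Phi (k+2)` vanishes on the adjoined subalgebra
      have hspan : wStar u ∈ Submodule.span ℂ
          (Submonoid.closure {x : FreeAlgebra ℂ (Fin 2) | ∃ w : FreeMonoid (Fin 2),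
            (FreeMonoid.toList w).length ≤ k' + 1 ∧ x = wStar w} : Set (FreeAlgebra ℂ (Fin 2))) := by
        rw [← Algebra.adjoin_eq_span]
        exact hmem
      have hzero : Phi (k' + 2) (wStar u) = 0 := by
        refine Submodule.span_induction (p := fun x _ => Phi (k' + 2) x = 0)
          ?_ (by simp) ?_ ?_ hspan
        · intro x hx
          obtain ⟨L, hL, rfl⟩ := Submonoid.exists_list_of_mem_closure hx
          exact Phi_listProd (k' + 1) L hL
        · intro x y _ _ hx hy
          rw [map_add, hx, hy, add_zero]
        · intro a x _ hx
          rw [map_smul, hx, smul_zero]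
      rw [hPhi] at hzero
      norm_num at hzero
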